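/- The function g(x) = 1/x − 1/(e^x − 1) on (0,∞) is nonnegative, non-increasing, and tends to 1/2 as x → 0⁺. -/

import Mathlib

open Real Set Filter Topology

theorem stmt_9 :
    (∀ x : ℝ, 0 < x → 0 ≤ 1 / x - 1 / (Real.exp x - 1)) ∧
      (AntitoneOn (fun x : ℝ => 1 / x - 1 / (Real.exp x - 1)) (Set.Ioi 0)) ∧
      Filter.Tendsto (fun x : ℝ => 1 / x - 1 / (Real.exp x - 1))
        (nhdsWithin 0 (Set.Ioi 0)) (nhds (1 / 2)) := by
  have hepos : ∀ x : ℝ, 0 < x → 0 < Real.exp x - 1 := by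
    intro x hx
    have := Real.exp_lt_exp.2 hx
    rw [Real.exp_zero] at this
    linarith
  refine ⟨?_, ?_, ?_⟩
  · intro x hx
    have h1 : x ≤ Real.exp x - 1 := by linarith [Real.add_one_le_exp x]
    have h2 := one_div_le_one_div_of_le hx h1
    linarith
  · -- antitone
    have hderiv : ∀ x : ℝ, 0 < x →
        HasDerivAt (fun x : ℝ => 1 / x - 1 / (Real.exp x - 1))
          (-(1 / x ^ 2) + Real.exp x / (Real.exp x - 1) ^ 2) x := by
      intro x hx
      have he : Real.exp x - 1 ≠ 0 := ne_of_gt (hepos x hx)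
      have h1 : HasDerivAt (fun y : ℝ => 1 / y) (-(1 / x ^ 2)) x := by
        simpa [one_div] using hasDerivAt_inv (ne_of_gt hx)
      have h2 : HasDerivAt (fun y : ℝ => Real.exp y - 1) (Real.exp x) x :=
        (Real.hasDerivAt_exp x).sub_const 1
      have h3 := h2.inv he
      have h4 := h1.sub h3
      simp only [one_div] at h4 ⊢
      exact h4.congr_deriv (by ring)
    apply antitoneOn_of_deriv_nonpos (convex_Ioi 0)
    · apply ContinuousOn.sub
      · exact continuousOn_const.div continuousOn_id fun x hx => ne_of_gt hx
      · exact continuousOn_const.div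
          ((Real.continuous_exp.continuousOn).sub continuousOn_const)
          fun x hx => ne_of_gt (hepos x hx)
    · rw [interior_Ioi]
      intro x hx
      exact (hderiv x hx).differentiableAt.differentiableWithinAt
    · rw [interior_Ioi]
      intro x hx
      have hx0 : (0:ℝ) < x := hx
      rw [(hderiv x hx).deriv]
      have he : 0 < Real.exp x - 1 := hepos x hx
      have hkey : x ^ 2 * Real.exp x ≤ (Real.exp x - 1) ^ 2 := by
        have hs : x / 2 < Real.sinh (x / 2) := Real.self_lt_sinh_iff.2 (by linarith)
        rw [Real.sinh_eq] at hs
        set a := Real.exp (x / 2) with ha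
        set b := Real.exp (-(x / 2)) with hb
        have hab : a * b = 1 := by
          rw [ha, hb, ← Real.exp_add]; simp
        have ha2 : a * a = Real.exp x := by
          rw [ha, ← Real.exp_add]; ring_nf
        have hxab : x < a - b := by linarith
        have hx2 : x ^ 2 < (a - b) ^ 2 := by nlinarith [hx0, hxab]
        nlinarith [Real.exp_pos (x / 2), Real.exp_pos (-(x / 2)), sq_nonneg a]
      have h1 : Real.exp x / (Real.exp x - 1) ^ 2 ≤ 1 / x ^ 2 := by
        rw [div_le_div_iff₀ (by positivity) (by positivity)]
        linarith
      linarith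
  · -- limit
    have hmain : ∀ᶠ x : ℝ in nhdsWithin 0 (Set.Ioi 0),
        1 / x - 1 / (Real.exp x - 1)
          = (Real.exp x - 1 - x) / (x * (Real.exp x - 1)) := by
      filter_upwards [self_mem_nhdsWithin] with x hx
      have hx : (0:ℝ) < x := hx
      have he : Real.exp x - 1 ≠ 0 := ne_of_gt (hepos x hx)
      field_simp
    rw [tendsto_congr' hmain]
    -- L'Hôpital twice on (0,1)
    have hlim2 : Tendsto (fun x : ℝ => Real.exp x - 1) (𝓝[>] 0) (𝓝 0) :=
      ((Real.continuous_exp.sub continuous_const).tendsto' 0 0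
        (by simp)).mono_left nhdsWithin_le_nhds
    have hinner : Tendsto
        (fun x : ℝ => (Real.exp x - 1) / (Real.exp x - 1 + x * Real.exp x))
        (𝓝[>] 0) (𝓝 (1 / 2)) := by
      apply HasDerivAt.lhopital_zero_right_on_Ioo (f' := fun x => Real.exp x)
        (g' := fun x => 2 * Real.exp x + x * Real.exp x) (b := 1) one_pos
      · intro x _
        exact (Real.hasDerivAt_exp x).sub_const 1
      · intro x _
        have h1 : HasDerivAt (fun y : ℝ => Real.exp y - 1) (Real.exp x) x :=
          (Real.hasDerivAt_exp x).sub_const 1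
        have h2 : HasDerivAt (fun y : ℝ => y * Real.exp y)
            (1 * Real.exp x + x * Real.exp x) x :=
          (hasDerivAt_id x).mul (Real.hasDerivAt_exp x)
        exact (h1.add h2).congr_deriv (by ring)
      · intro x hx
        have := Real.exp_pos x
        nlinarith [hx.1]
      · exact hlim2
      · exact (((Real.continuous_exp.sub continuous_const).add
            (continuous_id.mul Real.continuous_exp)).tendsto' 0 0
            (by simp)).mono_left nhdsWithin_le_nhds
      · have hnum : Tendsto Real.exp (𝓝 0) (𝓝 1) :=
          Real.continuous_exp.tendsto' 0 1 (by simp)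
        have hcden : Continuous fun x : ℝ => 2 * Real.exp x + x * Real.exp x := by
          continuity
        have hden : Tendsto (fun x : ℝ => 2 * Real.exp x + x * Real.exp x) (𝓝 0) (𝓝 2) :=
          hcden.tendsto' 0 2 (by norm_num)
        have h := hnum.div hden (by norm_num)
        norm_num at h
        exact h.mono_left nhdsWithin_le_nhds
    apply HasDerivAt.lhopital_zero_right_on_Ioo (f' := fun x => Real.exp x - 1)
      (g' := fun x => Real.exp x - 1 + x * Real.exp x) (b := 1) one_pos
    · intro x _
      have h := ((Real.hasDerivAt_exp x).sub_const 1).sub (hasDerivAt_id x)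
      exact h
    · intro x _
      have h1 : HasDerivAt (fun y : ℝ => Real.exp y - 1) (Real.exp x) x :=
        (Real.hasDerivAt_exp x).sub_const 1
      have h2 := (hasDerivAt_id x).mul h1
      have h3 := (hasDerivAt_id x).mul (Real.hasDerivAt_exp x)
      have : HasDerivAt (fun y : ℝ => y * (Real.exp y - 1))
          (1 * (Real.exp x - 1) + x * Real.exp x) x := (hasDerivAt_id x).mul h1
      convert this using 1
      ring
    · intro x hx
      have := hepos x hx.1
      have := Real.exp_pos x
      nlinarith [hx.1]
    · exact (((Real.continuous_exp.sub continuous_const).sub continuous_id).tendsto' 0 0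
        (by simp)).mono_left nhdsWithin_le_nhds
    · exact ((continuous_id.mul (Real.continuous_exp.sub continuous_const)).tendsto' 0 0
        (by simp)).mono_left nhdsWithin_le_nhds
    · exact hinner
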